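/- Pre-associative (dendriform) algebras do not satisfy the Dong property: there exist a dendriform algebra A over ℚ with operations λ(x,y) = x ≺ y and ρ(x,y) = x ≻ y, pairwise mutually F-local formal distributions a, b, c over A for the family F = {λ, ρ}, an n ∈ ℕ, and operations μ, ν ∈ F such that at least one of the ordered pairs (a ∘_{μ,n} b, c), (c, a ∘_{μ,n} b) is not ν-local. -/

import Mathlib

/-- The ordered pair of formal distributions `(a, b)` over `A` is `μ`-local:
there is `N` with `(w - z)^N μ(a(w), b(z)) = 0`, encoded coefficient-wise. -/
def IsLocalPair {A : Type*} [AddCommGroup A] (μ : A → A → A) (a b : ℤ → A) : Prop :=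
  ∃ N : ℕ, ∀ m p : ℤ,
    ∑ s ∈ Finset.range (N + 1),
      ((-1 : ℤ) ^ s * (N.choose s : ℤ)) • μ (a (m + (N : ℤ) - (s : ℤ))) (b (p + (s : ℤ))) = 0

/-- The `n`-th `μ`-product `a ∘_{μ,n} b` of formal distributions,
encoding `Res_{ξ=0} (ξ - w)^n μ(a(ξ), b(w))`. -/
def NthProduct {A : Type*} [AddCommGroup A] (μ : A → A → A) (n : ℕ) (a b : ℤ → A) : ℤ → A :=
  fun m => ∑ j ∈ Finset.range (n + 1),
    ((-1 : ℤ) ^ j * (n.choose j : ℤ)) • μ (a ((n : ℤ) - (j : ℤ))) (b (m + (j : ℤ)))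

/-- Three formal distributions `a, b, c` are pairwise mutually `μ`-local. -/
def PairwiseMutuallyLocal {A : Type*} [AddCommGroup A] (μ : A → A → A) (a b c : ℤ → A) : Prop :=
  IsLocalPair μ a b ∧ IsLocalPair μ b a ∧ IsLocalPair μ a c ∧ IsLocalPair μ c a ∧
    IsLocalPair μ b c ∧ IsLocalPair μ c b

/-- `μ : A → A → A` is `k`-bilinear. -/
def IsBilinear (k : Type*) [Field k] {A : Type*} [AddCommGroup A] [Module k A]
    (μ : A → A → A) : Prop :=
  (∀ x y z : A, μ (x + y) z = μ x z + μ y z) ∧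
    (∀ x y z : A, μ x (y + z) = μ x y + μ x z) ∧
    (∀ (r : k) (x y : A), μ (r • x) y = r • μ x y) ∧
    (∀ (r : k) (x y : A), μ x (r • y) = r • μ x y)

noncomputable section DendriformCounterexample

open scoped TensorProduct

abbrev Rq : Type := AddMonoidAlgebra ℚ ℤ
abbrev Sq : Type := TensorProduct ℚ Rq Rq
abbrev Aex : Type := Rq × Rq × Rq × Rq × Sq

def lop (x y : Aex) : Aex := (0, 0, 0, x.1 * y.2.1, 0)
def rop (x y : Aex) : Aex := (0, 0, 0, -(x.1 * y.2.1), x.2.2.2.1 ⊗ₜ[ℚ] y.2.2.1)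

def aD (m : ℤ) : Aex := (AddMonoidAlgebra.single m (1:ℚ), 0, 0, 0, 0)
def bD (m : ℤ) : Aex := (0, AddMonoidAlgebra.single m (1:ℚ), 0, 0, 0)
def cD (m : ℤ) : Aex := (0, 0, AddMonoidAlgebra.single m (1:ℚ), 0, 0)

lemma isLocal_of_zero {A : Type*} [AddCommGroup A] (μ : A → A → A) (a b : ℤ → A)
    (h : ∀ i j, μ (a i) (b j) = 0) : IsLocalPair μ a b :=
  ⟨0, fun m p => by simp [h]⟩

lemma lop_ab_local : IsLocalPair lop aD bD := by
  refine ⟨1, fun m p => ?_⟩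
  have key : ∀ s : ℕ, lop (aD (m + ((1:ℕ):ℤ) - (s:ℤ))) (bD (p + (s:ℤ)))
      = (0, 0, 0, (AddMonoidAlgebra.single (m + 1 + p) (1:ℚ) : Rq), 0) := by
    intro s
    have hidx : m + ((1:ℕ):ℤ) - (s:ℤ) + (p + (s:ℤ)) = m + 1 + p := by push_cast; ring
    simp only [lop, aD, bD, AddMonoidAlgebra.single_mul_single, mul_one, hidx]
  rw [Finset.sum_range_succ, Finset.sum_range_one, key 0, key 1]
  norm_num

lemma rop_ab_local : IsLocalPair rop aD bD := by
  refine ⟨1, fun m p => ?_⟩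
  have key : ∀ s : ℕ, rop (aD (m + ((1:ℕ):ℤ) - (s:ℤ))) (bD (p + (s:ℤ)))
      = (0, 0, 0, -(AddMonoidAlgebra.single (m + 1 + p) (1:ℚ) : Rq), 0) := by
    intro s
    have hidx : m + ((1:ℕ):ℤ) - (s:ℤ) + (p + (s:ℤ)) = m + 1 + p := by push_cast; ring
    simp only [rop, aD, bD, AddMonoidAlgebra.single_mul_single, mul_one, hidx,
      TensorProduct.zero_tmul]
  rw [Finset.sum_range_succ, Finset.sum_range_one, key 0, key 1]
  norm_num

lemma dD_eq (m : ℤ) : NthProduct lop 0 aD bD m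
    = ((0 : Rq), (0:Rq), (0:Rq), (AddMonoidAlgebra.single m (1:ℚ) : Rq), (0:Sq)) := by
  have hidx : ((0:ℕ):ℤ) - ((0:ℕ):ℤ) + (m + ((0:ℕ):ℤ)) = m := by push_cast; ring
  simp only [NthProduct, zero_add, Finset.sum_range_one, pow_zero, Nat.choose_self,
    Nat.cast_one, mul_one, one_smul, lop, aD, bD, AddMonoidAlgebra.single_mul_single, hidx]

def proj5 : Aex →ₗ[ℚ] Sq where
  toFun x := x.2.2.2.2
  map_add' _ _ := rfl
  map_smul' _ _ := rfl

lemma not_local_dc : ¬ IsLocalPair rop (NthProduct lop 0 aD bD) cD := by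
  rintro ⟨N, h⟩
  have h0 := h 0 0
  have hd : ∀ s : ℕ, NthProduct lop 0 aD bD ((0:ℤ) + (N:ℤ) - (s:ℤ))
      = ((0 : Rq), (0:Rq), (0:Rq),
          (AddMonoidAlgebra.single ((0:ℤ) + (N:ℤ) - (s:ℤ)) (1:ℚ) : Rq), (0:Sq)) := fun s => dD_eq _
  let Φ : Aex →ₗ[ℚ] ℚ :=
    ((TensorProduct.lid ℚ ℚ).toLinearMap.comp
      (TensorProduct.map (Finsupp.lapply ((N:ℤ)) ∘ₗ (AddMonoidAlgebra.coeffLinearEquiv ℚ).toLinearMap) (Finsupp.lapply (0:ℤ) ∘ₗ (AddMonoidAlgebra.coeffLinearEquiv ℚ).toLinearMap))).comp proj5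
  have hsum := congrArg Φ h0
  rw [map_sum, map_zero] at hsum
  have hterm : ∀ s ∈ Finset.range (N+1),
      Φ (((-1 : ℤ) ^ s * (N.choose s : ℤ)) •
        rop (NthProduct lop 0 aD bD ((0:ℤ) + (N:ℤ) - (s:ℤ))) (cD ((0:ℤ) + (s:ℤ))))
      = if s = 0 then 1 else 0 := by
    intro s _
    rw [map_zsmul, hd s]
    set x : Rq := AddMonoidAlgebra.single ((0:ℤ) + (N:ℤ) - (s:ℤ)) (1:ℚ) with hx
    set y : Rq := AddMonoidAlgebra.single ((0:ℤ) + (s:ℤ)) (1:ℚ) with hy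
    have hrop : rop (((0:Rq), (0:Rq), (0:Rq), x, (0:Sq)) : Aex) (cD ((0:ℤ) + (s:ℤ)))
        = (((0:Rq), (0:Rq), (0:Rq), (0:Rq), x ⊗ₜ[ℚ] y) : Aex) := by
      simp only [rop, cD, zero_mul, neg_zero, ← hy]
    have hΦ1 : Φ ((((0:Rq), (0:Rq), (0:Rq), (0:Rq), x ⊗ₜ[ℚ] y)) : Aex)
        = (TensorProduct.lid ℚ ℚ)
            (TensorProduct.map (Finsupp.lapply ((N:ℤ)) ∘ₗ (AddMonoidAlgebra.coeffLinearEquiv ℚ).toLinearMap) (Finsupp.lapply (0:ℤ) ∘ₗ (AddMonoidAlgebra.coeffLinearEquiv ℚ).toLinearMap)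
              (x ⊗ₜ[ℚ] y)) := rfl
    rw [hrop, hΦ1, TensorProduct.map_tmul, TensorProduct.lid_tmul, LinearMap.comp_apply,
      LinearMap.comp_apply, LinearEquiv.coe_coe, Finsupp.lapply_apply,
      Finsupp.lapply_apply, hx, hy]
    change ((-1 : ℤ) ^ s * (N.choose s : ℤ)) •
      (AddMonoidAlgebra.single ((0:ℤ) + (N:ℤ) - (s:ℤ)) (1:ℚ)).coeff (N:ℤ) •
      (AddMonoidAlgebra.single ((0:ℤ) + (s:ℤ)) (1:ℚ)).coeff 0 = _
    rw [AddMonoidAlgebra.coeff_single, AddMonoidAlgebra.coeff_single]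
    rcases eq_or_ne s 0 with rfl | hs0
    · rw [Finsupp.single_apply, Finsupp.single_apply, if_pos (by omega), if_pos (by omega)]
      norm_num
    · rw [Finsupp.single_apply (a := (0:ℤ)+(s:ℤ)) (b := (1:ℚ)) (a' := (0:ℤ)),
        if_neg (by omega), smul_zero, smul_zero, if_neg hs0]
  rw [Finset.sum_congr rfl hterm] at hsum
  simp [Finset.sum_ite_eq'] at hsum

lemma lop_bilinear : IsBilinear ℚ lop := by
  refine ⟨fun x y z => ?_, fun x y z => ?_, fun q x y => ?_, fun q x y => ?_⟩ <;>
    simp [lop, Prod.ext_iff, add_mul, mul_add, smul_mul_assoc, mul_smul_comm]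

lemma rop_bilinear : IsBilinear ℚ rop := by
  refine ⟨fun x y z => ?_, fun x y z => ?_, fun q x y => ?_, fun q x y => ?_⟩ <;>
    simp [rop, Prod.ext_iff, add_mul, mul_add, smul_mul_assoc, mul_smul_comm,
      TensorProduct.add_tmul, TensorProduct.tmul_add, TensorProduct.smul_tmul',
      TensorProduct.tmul_smul, neg_add] <;> ring_nf

lemma dend1 : ∀ x y z : Aex, lop (lop x y) z = lop x (lop y z) + lop x (rop y z) := by
  intro x y z
  simp [lop, rop, Prod.ext_iff]

lemma dend2 : ∀ x y z : Aex, lop (rop x y) z = rop x (lop y z) := by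
  intro x y z
  simp [lop, rop, Prod.ext_iff, TensorProduct.tmul_zero]

lemma dend3 : ∀ x y z : Aex, rop (lop x y) z + rop (rop x y) z = rop x (rop y z) := by
  intro x y z
  simp [lop, rop, Prod.ext_iff, TensorProduct.tmul_zero, TensorProduct.neg_tmul]

lemma zero_pairs :
    (∀ i j, lop (bD i) (aD j) = 0) ∧ (∀ i j, rop (bD i) (aD j) = 0) ∧
    (∀ i j, lop (aD i) (cD j) = 0) ∧ (∀ i j, rop (aD i) (cD j) = 0) ∧
    (∀ i j, lop (cD i) (aD j) = 0) ∧ (∀ i j, rop (cD i) (aD j) = 0) ∧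
    (∀ i j, lop (bD i) (cD j) = 0) ∧ (∀ i j, rop (bD i) (cD j) = 0) ∧
    (∀ i j, lop (cD i) (bD j) = 0) ∧ (∀ i j, rop (cD i) (bD j) = 0) := by
  refine ⟨?_, ?_, ?_, ?_, ?_, ?_, ?_, ?_, ?_, ?_⟩ <;> intro i j <;>
    simp [lop, rop, aD, bD, cD, Prod.ext_iff, TensorProduct.zero_tmul,
      TensorProduct.tmul_zero]

/-- Pre-associative (dendriform) algebras do not satisfy the Dong property.
Here `l x y = x ≺ y` and `r x y = x ≻ y`. -/
theorem dendriform_not_dong_property :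
    ∃ (A : Type) (_ : AddCommGroup A) (_ : Module ℚ A) (l r : A → A → A),
      IsBilinear ℚ l ∧ IsBilinear ℚ r ∧
      (∀ x y z : A, l (l x y) z = l x (l y z) + l x (r y z)) ∧
      (∀ x y z : A, l (r x y) z = r x (l y z)) ∧
      (∀ x y z : A, r (l x y) z + r (r x y) z = r x (r y z)) ∧
      ∃ a b c : ℤ → A,
        (∀ μ ∈ ({l, r} : Set (A → A → A)), PairwiseMutuallyLocal μ a b c) ∧
        ∃ (n : ℕ) (μ ν : A → A → A), μ ∈ ({l, r} : Set (A → A → A)) ∧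
          ν ∈ ({l, r} : Set (A → A → A)) ∧
          (¬ IsLocalPair ν (NthProduct μ n a b) c ∨
           ¬ IsLocalPair ν c (NthProduct μ n a b)) := by
  obtain ⟨z1, z2, z3, z4, z5, z6, z7, z8, z9, z10⟩ := zero_pairs
  refine ⟨Aex, inferInstance, inferInstance, lop, rop, lop_bilinear, rop_bilinear,
    dend1, dend2, dend3, aD, bD, cD, ?_, 0, lop, rop, Or.inl rfl, Or.inr rfl,
    Or.inl not_local_dc⟩
  rintro μ (rfl | rfl)
  · exact ⟨lop_ab_local, isLocal_of_zero _ _ _ z1, isLocal_of_zero _ _ _ z3,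
      isLocal_of_zero _ _ _ z5, isLocal_of_zero _ _ _ z7, isLocal_of_zero _ _ _ z9⟩
  · exact ⟨rop_ab_local, isLocal_of_zero _ _ _ z2, isLocal_of_zero _ _ _ z4,
      isLocal_of_zero _ _ _ z6, isLocal_of_zero _ _ _ z8, isLocal_of_zero _ _ _ z10⟩

end DendriformCounterexample
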